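/- Refinement avoidance for disk queries: Let O be a nonempty compact subset of the Euclidean plane with minimum bounding box [a0, b0] × [a1, b1], where a_i and b_i are the infimum and supremum of the i-th coordinate over O. Let q be a point and ε ≥ 0. If at least two of the four corners (a_u-or-b_u, a_v-or-b_v) of the bounding box, indexed by distinct index pairs, lie within Euclidean distance ε of q, then there exists a point p ∈ O with dist(p, q) ≤ ε; i.e., the object is guaranteed to intersect the disk of radius ε centered at q and the refinement step can be avoided. -/

import Mathlib

private lemma key1 {A lo hi t c E : ℝ} (h1 : A + (lo - c)^2 ≤ E) (h2 : A + (hi - c)^2 ≤ E)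
    (hl : lo ≤ t) (hr : t ≤ hi) : A + (t - c)^2 ≤ E := by
  rcases le_total t c with h | h
  · nlinarith
  · nlinarith

private lemma key2 {lo hi t c M : ℝ} (hl : lo ≤ t) (hr : t ≤ hi)
    (h1 : (lo - c)^2 ≤ M) (h2 : (hi - c)^2 ≤ M) : (t - c)^2 ≤ M := by
  rcases le_total t c with h | h
  · nlinarith
  · nlinarith

private lemma sharedKey {a1 b1 Y Y' A q1 E t : ℝ}
    (hYY : (Y = a1 ∧ Y' = b1) ∨ (Y = b1 ∧ Y' = a1))
    (h1 : A + (Y - q1)^2 ≤ E) (h2 : A + (Y' - q1)^2 ≤ E)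
    (hl : a1 ≤ t) (hr : t ≤ b1) : A + (t - q1)^2 ≤ E := by
  rcases hYY with ⟨h, h'⟩ | ⟨h, h'⟩ <;> subst h <;> subst h'
  · exact key1 h1 h2 hl hr
  · exact key1 h2 h1 hl hr

private lemma diagKey {a0 b0 X X' Y Y' q0 q1 E t t' : ℝ}
    (hXX : (X = a0 ∧ X' = b0) ∨ (X = b0 ∧ X' = a0))
    (h1 : (X - q0)^2 + (Y - q1)^2 ≤ E)
    (h2 : (X' - q0)^2 + (Y' - q1)^2 ≤ E)
    (htl : a0 ≤ t) (htr : t ≤ b0) (htl' : a0 ≤ t') (htr' : t' ≤ b0) :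
    (t - q0)^2 + (Y - q1)^2 ≤ E ∨ (t' - q0)^2 + (Y' - q1)^2 ≤ E := by
  rcases le_total ((X - q0)^2) ((X' - q0)^2) with hc | hc
  · right
    have hm : (t' - q0)^2 ≤ (X' - q0)^2 := by
      rcases hXX with ⟨h, h'⟩ | ⟨h, h'⟩ <;> subst h <;> subst h'
      · exact key2 htl' htr' hc le_rfl
      · exact key2 htl' htr' le_rfl hc
    linarith
  · left
    have hm : (t - q0)^2 ≤ (X - q0)^2 := by
      rcases hXX with ⟨h, h'⟩ | ⟨h, h'⟩ <;> subst h <;> subst h'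
      · exact key2 htl htr le_rfl hc
      · exact key2 htl htr hc le_rfl
    linarith


/-- **Refinement avoidance for disk queries.** Let `O` be a nonempty compact
subset of the Euclidean plane with minimum bounding box `[a 0, b 0] × [a 1, b 1]`
(coordinatewise inf/sup over `O`), with corners `corner u v` for `u, v ∈ {0,1}`
(encoded as Booleans). If at least two distinct corners of the bounding box lie
within Euclidean distance `ε ≥ 0` of a point `q`, then there is a point of `O`
within distance `ε` of `q`; i.e. the object intersects the disk and the
refinement step can be avoided. -/
theorem refinement_avoidance_disk
    (O : Set (EuclideanSpace ℝ (Fin 2))) (hO : O.Nonempty) (hOc : IsCompact O)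
    (a b : Fin 2 → ℝ)
    (ha : ∀ i, a i = sInf ((fun x => x i) '' O))
    (hb : ∀ i, b i = sSup ((fun x => x i) '' O))
    (corner : Bool → Bool → EuclideanSpace ℝ (Fin 2))
    (hcorner : ∀ u v, corner u v =
      (WithLp.toLp 2 ![if u then b 0 else a 0, if v then b 1 else a 1] : EuclideanSpace ℝ (Fin 2)))
    (q : EuclideanSpace ℝ (Fin 2)) (ε : ℝ) (hε : 0 ≤ ε)
    (htwo : ∃ u v u' v' : Bool, (u, v) ≠ (u', v') ∧
      dist (corner u v) q ≤ ε ∧ dist (corner u' v') q ≤ ε) :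
    ∃ p ∈ O, dist p q ≤ ε := by
  -- attainment of coordinatewise extrema
  have hmin : ∀ i, ∃ p ∈ O, p i = a i ∧ ∀ x ∈ O, p i ≤ x i := by
    intro i
    obtain ⟨p, hpO, hp⟩ := hOc.exists_isMinOn hO ((by fun_prop : Continuous (fun x : EuclideanSpace ℝ (Fin 2) => x i)).continuousOn)
    have hl : IsLeast ((fun x => x i) '' O) (p i) :=
      ⟨⟨p, hpO, rfl⟩, by rintro y ⟨x, hx, rfl⟩; exact hp hx⟩
    exact ⟨p, hpO, by rw [ha i, hl.csInf_eq], fun x hx => hp hx⟩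
  have hmax : ∀ i, ∃ p ∈ O, p i = b i ∧ ∀ x ∈ O, x i ≤ p i := by
    intro i
    obtain ⟨p, hpO, hp⟩ := hOc.exists_isMaxOn hO ((by fun_prop : Continuous (fun x : EuclideanSpace ℝ (Fin 2) => x i)).continuousOn)
    have hl : IsGreatest ((fun x => x i) '' O) (p i) :=
      ⟨⟨p, hpO, rfl⟩, by rintro y ⟨x, hx, rfl⟩; exact hp hx⟩
    exact ⟨p, hpO, by rw [hb i, hl.csSup_eq], fun x hx => hp hx⟩
  have hlb : ∀ i, ∀ x ∈ O, a i ≤ x i := by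
    intro i x hx
    obtain ⟨p, hpO, hp1, hp2⟩ := hmin i
    exact hp1 ▸ hp2 x hx
  have hub : ∀ i, ∀ x ∈ O, x i ≤ b i := by
    intro i x hx
    obtain ⟨p, hpO, hp1, hp2⟩ := hmax i
    exact hp1 ▸ hp2 x hx
  have hpick0 : ∀ u : Bool, ∃ p ∈ O, p 0 = (if u then b 0 else a 0) := by
    intro u; cases u
    · obtain ⟨p, hpO, hp1, _⟩ := hmin 0; exact ⟨p, hpO, by simpa using hp1⟩
    · obtain ⟨p, hpO, hp1, _⟩ := hmax 0; exact ⟨p, hpO, by simpa using hp1⟩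
  have hpick1 : ∀ v : Bool, ∃ p ∈ O, p 1 = (if v then b 1 else a 1) := by
    intro v; cases v
    · obtain ⟨p, hpO, hp1, _⟩ := hmin 1; exact ⟨p, hpO, by simpa using hp1⟩
    · obtain ⟨p, hpO, hp1, _⟩ := hmax 1; exact ⟨p, hpO, by simpa using hp1⟩
  have hd : ∀ x : EuclideanSpace ℝ (Fin 2),
      dist x q ≤ ε ↔ (x 0 - q 0)^2 + (x 1 - q 1)^2 ≤ ε^2 := by
    intro x
    rw [EuclideanSpace.dist_eq, Real.sqrt_le_left hε, Fin.sum_univ_two, Real.dist_eq,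
      Real.dist_eq, sq_abs, sq_abs]
  obtain ⟨u, v, u', v', hne, h1, h2⟩ := htwo
  rw [hcorner, hd] at h1 h2
  simp only [PiLp.toLp_apply, Matrix.cons_val_zero, Matrix.cons_val_one, Matrix.head_cons] at h1 h2
  by_cases hvv : v = v'
  · -- corners share the v index, hence differ in u
    subst hvv
    have hu : u ≠ u' := fun h => hne (by rw [h])
    have hXX : ((if u then b 0 else a 0) = a 0 ∧ (if u' then b 0 else a 0) = b 0) ∨
        ((if u then b 0 else a 0) = b 0 ∧ (if u' then b 0 else a 0) = a 0) := by
      cases u <;> cases u' <;> simp_all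
    obtain ⟨p, hpO, hp1⟩ := hpick1 v
    have h1' : ((if v then b 1 else a 1) - q 1)^2 + ((if u then b 0 else a 0) - q 0)^2 ≤ ε^2 := by
      linarith
    have h2' : ((if v then b 1 else a 1) - q 1)^2 + ((if u' then b 0 else a 0) - q 0)^2 ≤ ε^2 := by
      linarith
    have := sharedKey hXX h1' h2' (hlb 0 p hpO) (hub 0 p hpO)
    refine ⟨p, hpO, (hd p).2 ?_⟩
    rw [hp1]
    linarith
  · by_cases huu : u = u'
    · -- corners share the u index, differ in v
      subst huu
      have hYY : ((if v then b 1 else a 1) = a 1 ∧ (if v' then b 1 else a 1) = b 1) ∨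
          ((if v then b 1 else a 1) = b 1 ∧ (if v' then b 1 else a 1) = a 1) := by
        cases v <;> cases v' <;> simp_all
      obtain ⟨p, hpO, hp0⟩ := hpick0 u
      refine ⟨p, hpO, (hd p).2 ?_⟩
      rw [hp0]
      exact sharedKey hYY h1 h2 (hlb 1 p hpO) (hub 1 p hpO)
    · -- diagonal corners
      have hXX : ((if u then b 0 else a 0) = a 0 ∧ (if u' then b 0 else a 0) = b 0) ∨
          ((if u then b 0 else a 0) = b 0 ∧ (if u' then b 0 else a 0) = a 0) := by
        cases u <;> cases u' <;> simp_all
      obtain ⟨r, hrO, hr1⟩ := hpick1 v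
      obtain ⟨r', hr'O, hr'1⟩ := hpick1 v'
      rcases diagKey hXX h1 h2 (hlb 0 r hrO) (hub 0 r hrO) (hlb 0 r' hr'O) (hub 0 r' hr'O)
        with hgood | hgood
      · exact ⟨r, hrO, (hd r).2 (by rw [hr1]; exact hgood)⟩
      · exact ⟨r', hr'O, (hd r').2 (by rw [hr'1]; exact hgood)⟩
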